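/- Let α be a real number and n, k, r natural numbers. Then Σ_{j=0}^{n} (-1)^{n-j} C(n,j) binom(j+k+α, n+k+r) = binom(k+α, k+r), where binom(t, s) denotes the generalized binomial coefficient of a real number t and natural number s. -/

import Mathlib

open Finset

/-- Generalized binomial coefficient `t(t-1)⋯(t-s+1)/s!` of a real `t`. -/
noncomputable def rchoose (t : ℝ) (s : ℕ) : ℝ :=
  (∏ i ∈ range s, (t - (i : ℝ))) / (s.factorial : ℝ)

lemma rchoose_pascal (t : ℝ) (s : ℕ) :
    rchoose (t + 1) (s + 1) - rchoose t (s + 1) = rchoose t s := by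
  have h1 : ∏ i ∈ range (s + 1), (t + 1 - (i : ℝ)) =
      (∏ i ∈ range s, (t - (i : ℝ))) * (t + 1) := by
    rw [Finset.prod_range_succ']
    congr 1
    · exact Finset.prod_congr rfl fun i _ => by push_cast; ring
    · simp
  have h2 : ∏ i ∈ range (s + 1), (t - (i : ℝ)) =
      (∏ i ∈ range s, (t - (i : ℝ))) * (t - s) := Finset.prod_range_succ _ _
  have hf : ((s + 1).factorial : ℝ) = (s + 1) * s.factorial := by
    rw [Nat.factorial_succ]; push_cast; ring
  have hs : (s.factorial : ℝ) ≠ 0 := Nat.cast_ne_zero.2 s.factorial_ne_zero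
  have hs1 : ((s : ℝ) + 1) ≠ 0 := by positivity
  simp only [rchoose, h1, h2, hf]
  field_simp
  ring

lemma rchoose_fwdDiff_iter (n : ℕ) (c : ℝ) (s : ℕ) (x : ℝ) :
    (fwdDiff (1 : ℝ))^[n] (fun y => rchoose (y + c) (n + s)) x = rchoose (x + c) s := by
  induction n generalizing x with
  | zero => simp
  | succ n ih =>
    rw [Function.iterate_succ_apply]
    have : fwdDiff (1 : ℝ) (fun y => rchoose (y + c) (n + 1 + s)) =
        fun y => rchoose (y + c) (n + s) := by
      funext y
      have : n + 1 + s = (n + s) + 1 := by ring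
      rw [fwdDiff, this]
      have := rchoose_pascal (y + c) (n + s)
      rw [← this]
      ring_nf
    rw [this, ih]

theorem binomial_alternating_sum (α : ℝ) (n k r : ℕ) :
    ∑ j ∈ range (n + 1),
        (-1 : ℝ) ^ (n - j) * (n.choose j : ℝ) * rchoose ((j : ℝ) + (k : ℝ) + α) (n + k + r) =
      rchoose ((k : ℝ) + α) (k + r) := by
  have h := fwdDiff_iter_eq_sum_shift (M := ℝ) (G := ℝ) (h := 1)
      (fun y => rchoose (y + ((k : ℝ) + α)) (n + (k + r))) n 0
  have h2 := rchoose_fwdDiff_iter n ((k : ℝ) + α) (k + r) 0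
  rw [h] at h2
  rw [zero_add] at h2
  rw [← h2]
  apply Finset.sum_congr rfl
  intro j hj
  rw [zsmul_eq_mul]
  push_cast
  ring_nf
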